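/- A partially ordered vector space X contains a non-empty, order-bounded, order-open set if and only if the interior of the positive cone X₊ with respect to the order topology is non-empty. -/

import Mathlib

/-- A net (indexed by a preordered type) decreases to `x`: it is antitone and
`x` is the infimum of its range. -/
def DecrTo {ι X : Type*} [Preorder ι] [Preorder X] (f : ι → X) (x : X) : Prop :=
  Antitone f ∧ IsGLB (Set.range f) x

/-- `M` is a net catching set for `x`: for every net `f ↓ 0` (with nonempty
directed index set) there is an index `α` with `[x - f α, x + f α] ⊆ M`. -/
def NetCatchingSetFor {X : Type*} [AddCommGroup X] [PartialOrder X] [IsOrderedAddMonoid X] (M : Set X) (x : X) : Prop :=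
  ∀ (ι : Type) [Preorder ι], Nonempty ι → Directed (· ≤ ·) (id : ι → ι) →
    ∀ f : ι → X, DecrTo f 0 → ∃ α : ι, Set.Icc (x - f α) (x + f α) ⊆ M

/-- `O` is order open if it is a net catching set for each of its points. -/
def OrderOpen {X : Type*} [AddCommGroup X] [PartialOrder X] [IsOrderedAddMonoid X] (O : Set X) : Prop :=
  ∀ x ∈ O, NetCatchingSetFor O x

lemma ncs_preimage_add {X : Type*} [AddCommGroup X] [PartialOrder X] [IsOrderedAddMonoid X] {M : Set X} {x : X} (c : X)
    (h : NetCatchingSetFor M x) : NetCatchingSetFor ((· + c) ⁻¹' M) (x - c) := by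
  intro ι _ hne hdir f hf
  obtain ⟨α, hα⟩ := h ι hne hdir f hf
  refine ⟨α, fun z hz => hα ⟨?_, ?_⟩⟩
  · have := add_le_add_left hz.1 c
    rwa [show x - c - f α + c = x - f α from by abel] at this
  · have := add_le_add_left hz.2 c
    rwa [show x - c + f α + c = x + f α from by abel] at this

lemma ncs_reflect {X : Type*} [AddCommGroup X] [PartialOrder X] [IsOrderedAddMonoid X] {M : Set X} {x : X} (c : X)
    (h : NetCatchingSetFor M x) : NetCatchingSetFor {z | c - z ∈ M} (c - x) := by
  intro ι _ hne hdir f hf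
  obtain ⟨α, hα⟩ := h ι hne hdir f hf
  refine ⟨α, fun z hz => hα ⟨?_, ?_⟩⟩
  · have := sub_le_sub_left hz.2 c
    rwa [show c - (c - x + f α) = x - f α from by abel] at this
  · have := sub_le_sub_left hz.1 c
    rwa [show c - (c - x - f α) = x + f α from by abel] at this

lemma ncs_inter {X : Type*} [AddCommGroup X] [PartialOrder X] [IsOrderedAddMonoid X] {M N : Set X} {x : X}
    (hM : NetCatchingSetFor M x) (hN : NetCatchingSetFor N x) :
    NetCatchingSetFor (M ∩ N) x := by
  intro ι _ hne hdir f hf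
  obtain ⟨α₁, hα₁⟩ := hM ι hne hdir f hf
  obtain ⟨α₂, hα₂⟩ := hN ι hne hdir f hf
  obtain ⟨α, h1, h2⟩ := hdir α₁ α₂
  have hle1 : f α ≤ f α₁ := hf.1 h1
  have hle2 : f α ≤ f α₂ := hf.1 h2
  refine ⟨α, fun z hz => ⟨hα₁ ⟨?_, ?_⟩, hα₂ ⟨?_, ?_⟩⟩⟩
  · exact (sub_le_sub_left hle1 x).trans hz.1
  · exact hz.2.trans (add_le_add_right hle1 x)
  · exact (sub_le_sub_left hle2 x).trans hz.1
  · exact hz.2.trans (add_le_add_right hle2 x)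

/-- A partially ordered vector space `X` contains a non-empty, order-bounded,
order-open set if and only if the interior of the positive cone w.r.t. the
order topology is non-empty. -/
theorem stmt0 {X : Type*} [AddCommGroup X] [PartialOrder X] [IsOrderedAddMonoid X] [Module ℝ X] [PosSMulStrictMono ℝ X] :
    (∃ O : Set X, OrderOpen O ∧ O.Nonempty ∧ ∃ a b : X, O ⊆ Set.Icc a b) ↔
    (∃ x : X, ∃ O : Set X, OrderOpen O ∧ x ∈ O ∧ O ⊆ {z : X | 0 ≤ z}) := by
  constructor
  · rintro ⟨O, hO, ⟨x₀, hx₀⟩, a, b, hab⟩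
    refine ⟨x₀ - a, (· + a) ⁻¹' O, ?_, ?_, ?_⟩
    · intro y hy
      have := ncs_preimage_add a (hO (y + a) hy)
      rwa [add_sub_cancel_right] at this
    · simpa using hx₀
    · intro z hz
      exact sub_nonneg.mp (by simpa using sub_nonneg.mpr (hab hz).1)
  · rintro ⟨x, O, hO, hx, hsub⟩
    refine ⟨O ∩ {z | x + x - z ∈ O}, ?_, ⟨x, hx, by simpa using hx⟩, 0, x + x, ?_⟩
    · intro y hy
      refine ncs_inter (hO y hy.1) ?_
      have := ncs_reflect (x + x) (hO (x + x - y) hy.2)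
      rwa [sub_sub_cancel] at this
    · rintro z ⟨hz1, hz2⟩
      exact ⟨hsub hz1, by have := hsub hz2; simpa [sub_nonneg] using this⟩
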